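/- Let f_{i,j} : [0,∞) → [0,∞), i, j ≥ 1, be nonnegative functions satisfying the Chapman–Kolmogorov property f_{i,j}(s+t) = Σ_{k≥1} f_{i,k}(s) f_{k,j}(t) for all s, t ≥ 0 and i, j ≥ 1, the sub-stochasticity property Σ_{j≥1} f_{i,j}(t) ≤ 1 for all i ≥ 1 and t ≥ 0, and the positivity property f_{1,n}(u) > 0 for all n ≥ 1 and u > 0. If there exists t̃ > 0 with Σ_{j≥1} f_{1,j}(t̃) < 1, then Σ_{j≥1} f_{1,j}(t) < 1 for every t > 0. -/
import Mathlib

open scoped ENNReal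


/- STATEMENT 10.
For a nonnegative family `f_{i,j}` (indices `≥ 1`, here `f i j`) satisfying the
Chapman–Kolmogorov property, sub-stochasticity, and the positivity `f_{1,n}(u) > 0`
for all `n ≥ 1`, `u > 0`: if `Σ_{j≥1} f_{1,j}(t̃) < 1` for some `t̃ > 0`, then
`Σ_{j≥1} f_{1,j}(t) < 1` for every `t > 0`. -/
theorem stmt_10 (f : ℕ → ℕ → ℝ → ℝ)
    (hnonneg : ∀ i j : ℕ, 1 ≤ i → 1 ≤ j → ∀ t : ℝ, 0 ≤ t → 0 ≤ f i j t)
    (hCK : ∀ i j : ℕ, 1 ≤ i → 1 ≤ j → ∀ s t : ℝ, 0 ≤ s → 0 ≤ t →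
      f i j (s + t) = ∑' k : ℕ, f i (k + 1) s * f (k + 1) j t)
    (hsub : ∀ i : ℕ, 1 ≤ i → ∀ t : ℝ, 0 ≤ t →
      ∑' j : ℕ, ENNReal.ofReal (f i (j + 1) t) ≤ 1)
    (hpos : ∀ n : ℕ, 1 ≤ n → ∀ u : ℝ, 0 < u → 0 < f 1 n u)
    (ttilde : ℝ) (httilde : 0 < ttilde)
    (hlt : ∑' j : ℕ, ENNReal.ofReal (f 1 (j + 1) ttilde) < 1) :
    ∀ t : ℝ, 0 < t → ∑' j : ℕ, ENNReal.ofReal (f 1 (j + 1) t) < 1 := by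
  -- bound: each entry is ≤ 1
  have hb : ∀ k j : ℕ, ∀ u : ℝ, 0 ≤ u → f (k + 1) (j + 1) u ≤ 1 := by
    intro k j u hu
    have h1 := hsub (k + 1) (Nat.le_add_left 1 k) u hu
    have h2 : ENNReal.ofReal (f (k + 1) (j + 1) u) ≤ 1 :=
      le_trans (ENNReal.le_tsum j) h1
    rwa [ENNReal.ofReal_le_one] at h2
  -- summability of the first row
  have hsumm : ∀ s : ℝ, 0 ≤ s → Summable (fun k : ℕ => f 1 (k + 1) s) := by
    intro s hs
    have h1 := hsub 1 le_rfl s hs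
    have h2 : (∑' k : ℕ, ENNReal.ofReal (f 1 (k + 1) s)) ≠ ⊤ :=
      ne_top_of_le_ne_top ENNReal.one_ne_top h1
    have h3 := ENNReal.summable_toReal h2
    exact h3.congr fun k =>
      ENNReal.toReal_ofReal (hnonneg 1 (k + 1) le_rfl (Nat.le_add_left 1 k) s hs)
  -- the key Chapman–Kolmogorov identity at the ENNReal level
  have key : ∀ s u : ℝ, 0 ≤ s → 0 ≤ u →
      (∑' j : ℕ, ENNReal.ofReal (f 1 (j + 1) (s + u)))
        = ∑' k : ℕ, ENNReal.ofReal (f 1 (k + 1) s) *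
            ∑' j : ℕ, ENNReal.ofReal (f (k + 1) (j + 1) u) := by
    intro s u hs hu
    have hnn : ∀ k j : ℕ, 0 ≤ f 1 (k + 1) s * f (k + 1) (j + 1) u := fun k j =>
      mul_nonneg (hnonneg 1 (k + 1) le_rfl (Nat.le_add_left 1 k) s hs)
        (hnonneg (k + 1) (j + 1) (Nat.le_add_left 1 k) (Nat.le_add_left 1 j) u hu)
    have hsumm2 : ∀ j : ℕ, Summable (fun k : ℕ => f 1 (k + 1) s * f (k + 1) (j + 1) u) := by
      intro j
      refine Summable.of_nonneg_of_le (fun k => hnn k j) (fun k => ?_) (hsumm s hs)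
      calc f 1 (k + 1) s * f (k + 1) (j + 1) u
          ≤ f 1 (k + 1) s * 1 :=
            mul_le_mul_of_nonneg_left (hb k j u hu)
              (hnonneg 1 (k + 1) le_rfl (Nat.le_add_left 1 k) s hs)
        _ = f 1 (k + 1) s := mul_one _
    calc (∑' j : ℕ, ENNReal.ofReal (f 1 (j + 1) (s + u)))
        = ∑' j : ℕ, ∑' k : ℕ,
            ENNReal.ofReal (f 1 (k + 1) s) * ENNReal.ofReal (f (k + 1) (j + 1) u) := by
          refine tsum_congr fun j => ?_
          rw [hCK 1 (j + 1) le_rfl (Nat.le_add_left 1 j) s u hs hu,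
            ENNReal.ofReal_tsum_of_nonneg (fun k => hnn k j) (hsumm2 j)]
          exact tsum_congr fun k =>
            ENNReal.ofReal_mul (hnonneg 1 (k + 1) le_rfl (Nat.le_add_left 1 k) s hs)
      _ = ∑' k : ℕ, ∑' j : ℕ,
            ENNReal.ofReal (f 1 (k + 1) s) * ENNReal.ofReal (f (k + 1) (j + 1) u) :=
          ENNReal.tsum_comm
      _ = ∑' k : ℕ, ENNReal.ofReal (f 1 (k + 1) s) *
            ∑' j : ℕ, ENNReal.ofReal (f (k + 1) (j + 1) u) :=
          tsum_congr fun k => ENNReal.tsum_mul_left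
  -- monotonicity of the total mass
  have hmono : ∀ s u : ℝ, 0 ≤ s → 0 ≤ u →
      (∑' j : ℕ, ENNReal.ofReal (f 1 (j + 1) (s + u)))
        ≤ ∑' j : ℕ, ENNReal.ofReal (f 1 (j + 1) s) := by
    intro s u hs hu
    rw [key s u hs hu]
    calc (∑' k : ℕ, ENNReal.ofReal (f 1 (k + 1) s) *
            ∑' j : ℕ, ENNReal.ofReal (f (k + 1) (j + 1) u))
        ≤ ∑' k : ℕ, ENNReal.ofReal (f 1 (k + 1) s) * 1 :=
          ENNReal.tsum_le_tsum fun k =>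
            mul_le_mul_right (hsub (k + 1) (Nat.le_add_left 1 k) u hu) _
      _ = ∑' k : ℕ, ENNReal.ofReal (f 1 (k + 1) s) := by simp
  -- strict loss lemma
  have strict : ∀ (a m : ℕ → ℝ≥0∞) (k0 : ℕ), (∀ k, m k ≤ 1) → (∑' k, a k) ≤ 1 →
      0 < a k0 → m k0 < 1 → (∑' k, a k * m k) < 1 := by
    intro a m k0 hm ha hak hmk
    have hε : 0 < a k0 * (1 - m k0) :=
      ENNReal.mul_pos hak.ne' (tsub_pos_of_lt hmk).ne'
    have hle : (∑' k, a k * m k) + a k0 * (1 - m k0) ≤ 1 := by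
      have e1 : (∑' k, a k * m k)
          = a k0 * m k0 + ∑' k, if k = k0 then 0 else a k * m k := by
        rw [ENNReal.tsum_eq_add_tsum_ite k0]
        congr 1
        exact tsum_congr fun x => by by_cases h : x = k0 <;> simp [h]
      have e2 : (∑' k, a k) = a k0 + ∑' k, if k = k0 then 0 else a k := by
        rw [ENNReal.tsum_eq_add_tsum_ite k0]
        congr 1
        exact tsum_congr fun x => by by_cases h : x = k0 <;> simp [h]
      calc (∑' k, a k * m k) + a k0 * (1 - m k0)
          = (a k0 * m k0 + a k0 * (1 - m k0)) + ∑' k, if k = k0 then 0 else a k * m k := by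
            rw [e1]; ring
        _ = a k0 + ∑' k, if k = k0 then 0 else a k * m k := by
            rw [← mul_add, add_tsub_cancel_of_le (hm k0), mul_one]
        _ ≤ a k0 + ∑' k, if k = k0 then 0 else a k := by
            gcongr with k
            split
            · exact le_rfl
            · calc a k * m k ≤ a k * 1 := mul_le_mul_right (hm k) _
                _ = a k := mul_one _
        _ = ∑' k, a k := e2.symm
        _ ≤ 1 := ha
    have hxne : (∑' k, a k * m k) ≠ ⊤ := by
      intro h
      rw [h] at hle
      simp at hle
    calc (∑' k, a k * m k)
        < (∑' k, a k * m k) + a k0 * (1 - m k0) :=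
          ENNReal.lt_add_right hxne hε.ne'
      _ ≤ 1 := hle
  intro t ht
  have hu : (0:ℝ) < t / 2 := by linarith
  -- there is some row k0 with mass < 1 at time t/2
  have hex : ∃ k0 : ℕ, (∑' j : ℕ, ENNReal.ofReal (f (k0 + 1) (j + 1) (t / 2))) < 1 := by
    by_contra hcon
    push_neg at hcon
    have H : ∀ k : ℕ, (∑' j : ℕ, ENNReal.ofReal (f (k + 1) (j + 1) (t / 2))) = 1 :=
      fun k => le_antisymm (hsub (k + 1) (Nat.le_add_left 1 k) (t / 2) hu.le) (hcon k)
    have step : ∀ s : ℝ, 0 ≤ s →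
        (∑' j : ℕ, ENNReal.ofReal (f 1 (j + 1) (s + t / 2)))
          = ∑' j : ℕ, ENNReal.ofReal (f 1 (j + 1) s) := by
      intro s hs
      rw [key s (t / 2) hs hu.le]
      exact tsum_congr fun k => by rw [H k, mul_one]
    have hn : ∀ n : ℕ, (∑' j : ℕ, ENNReal.ofReal (f 1 (j + 1) (t / 2 + n * (t / 2)))) = 1 := by
      intro n
      induction n with
      | zero =>
        have h0 : t / 2 + (0:ℕ) * (t / 2) = t / 2 := by push_cast; ring
        rw [h0]
        exact H 0
      | succ n ih =>
        have h1 : t / 2 + ((n + 1 : ℕ) : ℝ) * (t / 2) = (t / 2 + n * (t / 2)) + t / 2 := by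
          push_cast; ring
        rw [h1, step (t / 2 + n * (t / 2)) (by positivity)]
        exact ih
    obtain ⟨n, hn'⟩ := exists_nat_ge (ttilde / (t / 2))
    have hge : ttilde ≤ t / 2 + n * (t / 2) := by
      have h2 : ttilde ≤ n * (t / 2) := by
        rw [div_le_iff₀ hu] at hn'
        linarith
      linarith
    have hge2 : (1:ℝ≥0∞) ≤ ∑' j : ℕ, ENNReal.ofReal (f 1 (j + 1) ttilde) := by
      have heq : ttilde + (t / 2 + n * (t / 2) - ttilde) = t / 2 + n * (t / 2) := by ring
      have := hmono ttilde (t / 2 + n * (t / 2) - ttilde) httilde.le (by linarith)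
      rw [heq, hn n] at this
      exact this
    exact absurd hge2 (not_le.mpr hlt)
  obtain ⟨k0, hk0⟩ := hex
  have ha0 : 0 < ENNReal.ofReal (f 1 (k0 + 1) (t / 2)) :=
    ENNReal.ofReal_pos.mpr (hpos (k0 + 1) (Nat.le_add_left 1 k0) (t / 2) hu)
  have heqt : t = t / 2 + t / 2 := by ring
  rw [heqt, key (t / 2) (t / 2) hu.le hu.le]
  exact strict (fun k => ENNReal.ofReal (f 1 (k + 1) (t / 2)))
    (fun k => ∑' j : ℕ, ENNReal.ofReal (f (k + 1) (j + 1) (t / 2))) k0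
    (fun k => hsub (k + 1) (Nat.le_add_left 1 k) (t / 2) hu.le)
    (hsub 1 le_rfl (t / 2) hu.le) ha0 hk0
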